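/- Let Ū be C³ near x_i with |Ū''| ≤ α and suppose there is an extremum ξ₀ of Ū with Ū'(ξ₀) = 0 and |x_i − ξ₀| ≤ Δx. Define δ₊ = Ū(x_i + Δx) − Ū(x_i) and δ₋ = Ū(x_i) − Ū(x_i − Δx). Then δ₊² + δ₋² ≤ (5/2)·α²·Δx⁴ + C·Δx⁵ for some constant C depending only on bounds of Ū and its derivatives up to third order. -/

import Mathlib

open Set

/-- Lipschitz estimate from a global derivative bound. -/
lemma lip_of_deriv_le {f : ℝ → ℝ} (hf : Differentiable ℝ f) {K : ℝ}
    (hK : ∀ x, |deriv f x| ≤ K) (a b : ℝ) : |f b - f a| ≤ K * |b - a| := by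
  have := convex_univ.norm_image_sub_le_of_norm_deriv_le
    (f := f) (C := K) (fun x _ => hf x) (fun x _ => hK x)
    (mem_univ a) (mem_univ b)
  simpa [Real.norm_eq_abs] using this

/-- Comparison step: if `g 0 = 0` and `|g'| ≤ c s^n` on `s ≥ 0`, then
`|g t| ≤ c t^(n+1)/(n+1)` for `t ≥ 0`. -/
lemma step_bound {g : ℝ → ℝ} (hg : Differentiable ℝ g) {c : ℝ} {n : ℕ}
    (h0 : g 0 = 0) (hd : ∀ s, 0 ≤ s → |deriv g s| ≤ c * s ^ n)
    {t : ℝ} (ht : 0 ≤ t) : |g t| ≤ c * t ^ (n + 1) / (n + 1) := by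
  have hpow : Differentiable ℝ (fun s : ℝ => c * s ^ (n+1) / (n+1)) := by
    fun_prop
  have hderiv : ∀ s : ℝ, deriv (fun s : ℝ => c * s ^ (n+1) / (n+1)) s = c * s ^ n := by
    intro s
    have : (fun s : ℝ => c * s ^ (n+1) / (n+1)) = fun s : ℝ => (c / (n+1)) * s ^ (n+1) := by
      funext s; ring
    rw [this, deriv_const_mul _ (differentiable_pow (n+1)).differentiableAt, deriv_pow_field]
    field_simp
    push_cast [Nat.add_sub_cancel, Nat.add_sub_cancel_left]
    ring
  have key : ∀ h : ℝ → ℝ, Differentiable ℝ h → h 0 = 0 →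
      (∀ s, 0 ≤ s → deriv h s ≤ c * s ^ n) → h t ≤ c * t ^ (n+1) / (n+1) := by
    intro h hh h00 hh'
    have mono : MonotoneOn (fun s => c * s ^ (n+1)/(n+1) - h s) (Ici (0:ℝ)) := by
      apply monotoneOn_of_deriv_nonneg (convex_Ici 0)
        ((hpow.sub hh).continuous.continuousOn) ((hpow.sub hh).differentiableOn)
      intro x hx
      rw [interior_Ici] at hx
      rw [deriv_sub (hpow x) (hh x), hderiv]
      have := hh' x (le_of_lt hx)
      linarith
    have := mono (self_mem_Ici) (mem_Ici.2 ht) ht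
    simp only [h00] at this
    simp only [zero_pow (Nat.succ_ne_zero n), mul_zero, zero_div, sub_zero] at this
    linarith
  have h1 : g t ≤ c * t ^ (n+1)/(n+1) := by
    apply key g hg h0
    intro s hs
    exact le_trans (le_abs_self _) (hd s hs)
  have h2 : -g t ≤ c * t ^ (n+1)/(n+1) := by
    apply key (fun s => -g s) hg.neg (by simp [h0])
    intro s hs
    have : deriv (fun s => -g s) s = -deriv g s := by
      simpa using (deriv.neg (f := g) (x := s))
    rw [this]
    exact le_trans (neg_le_abs _) (by simpa using hd s hs)
  exact abs_le.2 ⟨by linarith, h1⟩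

/-- Second-order Taylor bound for nonneg increment. -/
lemma taylor2_pos {f : ℝ → ℝ} (hf : ContDiff ℝ 3 f) {B : ℝ}
    (hB : ∀ x, |deriv (deriv (deriv f)) x| ≤ B) (x : ℝ) {t : ℝ} (ht : 0 ≤ t) :
    |f (x + t) - f x - deriv f x * t - deriv (deriv f) x * t ^ 2 / 2| ≤ B * t ^ 3 / 6 := by
  have hf1 : Differentiable ℝ f := hf.differentiable (by norm_num)
  have hf2 : Differentiable ℝ (deriv f) := by
    have := (hf.iterate_deriv' 2 1).differentiable (by norm_num)
    simpa using this
  have hf3 : Differentiable ℝ (deriv (deriv f)) := by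
    have := (hf.iterate_deriv' 1 2).differentiable (by norm_num)
    simpa [Function.iterate_succ, Function.comp] using this
  -- first: P' s = f'(x+s) - f' x - f'' x * s, |P' s| ≤ B s²/2
  set P1 : ℝ → ℝ := fun s => deriv f (x + s) - deriv f x - deriv (deriv f) x * s with hP1
  have hP1d : Differentiable ℝ P1 := by
    apply Differentiable.sub
    apply Differentiable.sub
    · exact hf2.comp (differentiable_const _ |>.add differentiable_id)
    · exact differentiable_const _
    · fun_prop
  have hP1deriv : ∀ s, deriv P1 s = deriv (deriv f) (x + s) - deriv (deriv f) x := by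
    intro s
    rw [hP1]
    rw [deriv_fun_sub (by fun_prop) (by fun_prop), deriv_fun_sub (by fun_prop) (by fun_prop)]
    rw [deriv_comp_const_add]
    have hc : deriv (fun s : ℝ => deriv (deriv f) x * s) s = deriv (deriv f) x := by
      simpa using ((hasDerivAt_id s).const_mul (deriv (deriv f) x)).deriv
    simp only [hc, deriv_const]
    ring
  have hP1bound : ∀ s, 0 ≤ s → |deriv P1 s| ≤ B * s ^ 1 := by
    intro s hs
    rw [hP1deriv]
    have := lip_of_deriv_le hf3 hB x (x + s)
    simpa [abs_of_nonneg hs] using this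
  have hP1est : ∀ s, 0 ≤ s → |P1 s| ≤ B * s ^ 2 / 2 := by
    intro s hs
    have h := step_bound hP1d (by simp [hP1]) hP1bound hs
    norm_num at h
    linarith
  -- second: P s = f(x+s) - f x - f' x s - f'' x s²/2
  set P : ℝ → ℝ := fun s => f (x + s) - f x - deriv f x * s - deriv (deriv f) x * s ^ 2 / 2
    with hP
  have hPd : Differentiable ℝ P := by
    apply Differentiable.sub
    apply Differentiable.sub
    apply Differentiable.sub
    · exact hf1.comp (differentiable_const _ |>.add differentiable_id)
    · exact differentiable_const _
    · fun_prop
    · fun_prop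
  have hPderiv : ∀ s, deriv P s = P1 s := by
    intro s
    rw [hP, hP1]
    rw [deriv_fun_sub (by fun_prop) (by fun_prop), deriv_fun_sub (by fun_prop) (by fun_prop),
        deriv_fun_sub (by fun_prop) (by fun_prop)]
    rw [deriv_comp_const_add]
    have h1 : deriv (fun s : ℝ => deriv f x * s) s = deriv f x := by
      simpa using ((hasDerivAt_id s).const_mul (deriv f x)).deriv
    have h2 : deriv (fun s : ℝ => deriv (deriv f) x * s ^ 2 / 2) s
        = deriv (deriv f) x * s := by
      have : (fun s : ℝ => deriv (deriv f) x * s ^ 2 / 2)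
          = fun s : ℝ => (deriv (deriv f) x / 2) * s ^ 2 := by funext s; ring
      rw [this, deriv_const_mul _ (differentiable_pow 2).differentiableAt, deriv_pow_field]
      ring
    rw [h1, h2]
    simp only [deriv_const]
    ring
  have hPbound : ∀ s, 0 ≤ s → |deriv P s| ≤ (B/2) * s ^ 2 := by
    intro s hs
    rw [hPderiv]
    have := hP1est s hs
    linarith [this]
  have h := step_bound hPd (by simp [hP]) hPbound ht
  norm_num at h ⊢
  linarith

/-- First-order Taylor bound for nonneg increment. -/
lemma taylor1_pos {f : ℝ → ℝ} (hf : ContDiff ℝ 3 f) {K : ℝ}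
    (hK : ∀ x, |deriv (deriv f) x| ≤ K) (x : ℝ) {t : ℝ} (ht : 0 ≤ t) :
    |f (x + t) - f x - deriv f x * t| ≤ K * t ^ 2 / 2 := by
  have hf1 : Differentiable ℝ f := hf.differentiable (by norm_num)
  have hf2 : Differentiable ℝ (deriv f) := by
    have := (hf.iterate_deriv' 2 1).differentiable (by norm_num)
    simpa using this
  set Q : ℝ → ℝ := fun s => f (x + s) - f x - deriv f x * s with hQ
  have hQd : Differentiable ℝ Q := by
    apply Differentiable.sub
    apply Differentiable.sub
    · exact hf1.comp (differentiable_const _ |>.add differentiable_id)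
    · exact differentiable_const _
    · fun_prop
  have hQderiv : ∀ s, deriv Q s = deriv f (x + s) - deriv f x := by
    intro s
    rw [hQ, deriv_fun_sub (by fun_prop) (by fun_prop), deriv_fun_sub (by fun_prop) (by fun_prop),
        deriv_comp_const_add]
    have h1 : deriv (fun s : ℝ => deriv f x * s) s = deriv f x := by
      simpa using ((hasDerivAt_id s).const_mul (deriv f x)).deriv
    rw [h1]
    simp only [deriv_const]
    ring
  have hQbound : ∀ s, 0 ≤ s → |deriv Q s| ≤ K * s ^ 1 := by
    intro s hs
    rw [hQderiv]
    have := lip_of_deriv_le hf2 hK x (x + s)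
    simpa [abs_of_nonneg hs] using this
  have h := step_bound hQd (by simp [hQ]) hQbound ht
  norm_num at h ⊢
  linarith

/-- Facts about derivatives of `fun y => f (-y)`. -/
lemma neg_derivs {f : ℝ → ℝ} (hf : ContDiff ℝ 3 f) :
    ContDiff ℝ 3 (fun y => f (-y)) ∧
    deriv (fun y => f (-y)) = (fun y => -deriv f (-y)) ∧
    deriv (deriv (fun y => f (-y))) = (fun y => deriv (deriv f) (-y)) ∧
    deriv (deriv (deriv (fun y => f (-y)))) = (fun y => -deriv (deriv (deriv f)) (-y)) := by
  have hf2 : Differentiable ℝ (deriv f) := by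
    have := (hf.iterate_deriv' 2 1).differentiable (by norm_num)
    simpa using this
  have hf3 : Differentiable ℝ (deriv (deriv f)) := by
    have := (hf.iterate_deriv' 1 2).differentiable (by norm_num)
    simpa [Function.iterate_succ, Function.comp] using this
  have hg : ContDiff ℝ 3 (fun y => f (-y)) := hf.comp (contDiff_id.neg)
  have e1 : deriv (fun y => f (-y)) = (fun y => -deriv f (-y)) := by
    funext y; exact deriv_comp_neg f y
  have e2 : deriv (deriv (fun y => f (-y))) = (fun y => deriv (deriv f) (-y)) := by
    funext y
    rw [e1]
    have : deriv (fun y : ℝ => -deriv f (-y)) y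
        = -(deriv (fun y : ℝ => deriv f (-y)) y) := by
      simpa using (deriv.neg (f := fun y : ℝ => deriv f (-y)) (x := y))
    rw [this, deriv_comp_neg (deriv f) y]
    ring
  have e3 : deriv (deriv (deriv (fun y => f (-y))))
      = (fun y => -deriv (deriv (deriv f)) (-y)) := by
    funext y
    rw [e2]
    exact deriv_comp_neg (deriv (deriv f)) y
  exact ⟨hg, e1, e2, e3⟩

/-- Second-order Taylor bound, all increments. -/
lemma taylor2 {f : ℝ → ℝ} (hf : ContDiff ℝ 3 f) {B : ℝ}
    (hB : ∀ x, |deriv (deriv (deriv f)) x| ≤ B) (x t : ℝ) :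
    |f (x + t) - f x - deriv f x * t - deriv (deriv f) x * t ^ 2 / 2| ≤ B * |t| ^ 3 / 6 := by
  rcases le_or_gt 0 t with ht | ht
  · simpa [abs_of_nonneg ht] using taylor2_pos hf hB x ht
  · obtain ⟨hg, e1, e2, e3⟩ := neg_derivs hf
    have hB' : ∀ y, |deriv (deriv (deriv (fun y => f (-y)))) y| ≤ B := by
      intro y; rw [e3]; simpa using hB (-y)
    have h := taylor2_pos hg hB' (-x) (t := -t) (by linarith)
    rw [e2] at h
    rw [e1] at h
    have hx1 : -x + -t = -(x + t) := by ring
    rw [hx1] at h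
    simp only [neg_neg] at h
    have : f (x + t) - f x - deriv f x * t - deriv (deriv f) x * t ^ 2 / 2
        = f (x + t) - f x - -deriv f x * -t - deriv (deriv f) x * (-t) ^ 2 / 2 := by ring
    rw [this]
    have habs : |t| = -t := abs_of_neg ht
    rw [habs]
    exact h

/-- First-order Taylor bound, all increments. -/
lemma taylor1 {f : ℝ → ℝ} (hf : ContDiff ℝ 3 f) {K : ℝ}
    (hK : ∀ x, |deriv (deriv f) x| ≤ K) (x t : ℝ) :
    |f (x + t) - f x - deriv f x * t| ≤ K * t ^ 2 / 2 := by
  rcases le_or_gt 0 t with ht | ht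
  · exact taylor1_pos hf hK x ht
  · obtain ⟨hg, e1, e2, e3⟩ := neg_derivs hf
    have hK' : ∀ y, |deriv (deriv (fun y => f (-y))) y| ≤ K := by
      intro y; rw [e2]; exact hK (-y)
    have h := taylor1_pos hg hK' (-x) (t := -t) (by linarith)
    rw [e1] at h
    have hx1 : -x + -t = -(x + t) := by ring
    rw [hx1] at h
    simp only [neg_neg] at h
    have : f (x + t) - f x - deriv f x * t
        = f (x + t) - f x - -deriv f x * -t := by ring
    rw [this]
    have h2 : K * t ^ 2 / 2 = K * (-t) ^ 2 / 2 := by ring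
    rw [h2]
    exact h

theorem stmt_9 (Ubar : ℝ → ℝ) (hU : ContDiff ℝ 3 Ubar)
    (α B : ℝ)
    (hα : ∀ x : ℝ, |deriv (deriv Ubar) x| ≤ α)
    (hB : ∀ x : ℝ, |deriv (deriv (deriv Ubar)) x| ≤ B) :
    ∃ C : ℝ, ∀ Δx : ℝ, 0 < Δx → ∀ xi ξ₀ : ℝ,
      deriv Ubar ξ₀ = 0 → |xi - ξ₀| ≤ Δx →
      (Ubar (xi + Δx) - Ubar xi) ^ 2 + (Ubar xi - Ubar (xi - Δx)) ^ 2 ≤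
        (5/2) * α ^ 2 * Δx ^ 4 + C * Δx ^ 5 := by
  have hα0 : 0 ≤ α := le_trans (abs_nonneg _) (hα 0)
  have hB0 : 0 ≤ B := le_trans (abs_nonneg _) (hB 0)
  refine ⟨2 * α * B, ?_⟩
  intro Δx hΔx xi ξ₀ hξ hclose
  have hf2 : Differentiable ℝ (deriv Ubar) := by
    have := (hU.iterate_deriv' 2 1).differentiable (by norm_num)
    simpa using this
  have h3 : |deriv Ubar xi| ≤ α * Δx := by
    have h := lip_of_deriv_le hf2 hα ξ₀ xi
    rw [hξ, sub_zero] at h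
    exact h.trans (mul_le_mul_of_nonneg_left hclose hα0)
  set δp := Ubar (xi + Δx) - Ubar xi with hδp
  set δm := Ubar xi - Ubar (xi - Δx) with hδm
  set a := deriv Ubar xi * Δx with hadef
  set b := deriv (deriv Ubar) xi * Δx ^ 2 / 2 with hbdef
  set Rp := δp - (a + b) with hRpdef
  set Rm := δm - (a - b) with hRmdef
  have ha : |a| ≤ α * Δx ^ 2 := by
    rw [hadef, abs_mul, abs_of_pos hΔx]
    calc |deriv Ubar xi| * Δx ≤ (α * Δx) * Δx :=
          mul_le_mul_of_nonneg_right h3 hΔx.le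
      _ = α * Δx ^ 2 := by ring
  have hb : |b| ≤ α * Δx ^ 2 / 2 := by
    rw [hbdef, abs_div, abs_mul, abs_pow, abs_of_pos hΔx]
    have : |(2:ℝ)| = 2 := by norm_num
    rw [this]
    have := mul_le_mul_of_nonneg_right (hα xi) (pow_nonneg hΔx.le 2)
    linarith
  -- Taylor bounds
  have hT2p : |Rp| ≤ B * Δx ^ 3 / 6 := by
    have h := taylor2 hU hB xi Δx
    rw [abs_of_pos hΔx] at h
    have e : Ubar (xi + Δx) - Ubar xi - deriv Ubar xi * Δx
        - deriv (deriv Ubar) xi * Δx ^ 2 / 2 = Rp := by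
      rw [hRpdef, hδp, hadef, hbdef]; ring
    rwa [e] at h
  have hT2m : |Rm| ≤ B * Δx ^ 3 / 6 := by
    have h := taylor2 hU hB xi (-Δx)
    rw [abs_neg, abs_of_pos hΔx] at h
    have e1 : xi + -Δx = xi - Δx := by ring
    rw [e1] at h
    have e : Ubar (xi - Δx) - Ubar xi - deriv Ubar xi * -Δx
        - deriv (deriv Ubar) xi * (-Δx) ^ 2 / 2 = -Rm := by
      rw [hRmdef, hδm, hadef, hbdef]; ring
    rwa [e, abs_neg] at h
  have hT1p : |δp - a| ≤ α * Δx ^ 2 / 2 := by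
    have h := taylor1 hU hα xi Δx
    have e : Ubar (xi + Δx) - Ubar xi - deriv Ubar xi * Δx = δp - a := by
      rw [hδp, hadef]
    rwa [e] at h
  have hT1m : |δm - a| ≤ α * Δx ^ 2 / 2 := by
    have h := taylor1 hU hα xi (-Δx)
    have e1 : xi + -Δx = xi - Δx := by ring
    rw [e1] at h
    have e : Ubar (xi - Δx) - Ubar xi - deriv Ubar xi * -Δx = -(δm - a) := by
      rw [hδm, hadef]; ring
    rw [e, abs_neg] at h
    have e2 : α * (-Δx) ^ 2 / 2 = α * Δx ^ 2 / 2 := by ring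
    rwa [e2] at h
  have hRp2 : |Rp| ≤ α * Δx ^ 2 := by
    have e : Rp = (δp - a) - b := by rw [hRpdef]; ring
    rw [e]
    calc |(δp - a) - b| ≤ |δp - a| + |b| := abs_sub _ _
      _ ≤ α * Δx ^ 2 / 2 + α * Δx ^ 2 / 2 := add_le_add hT1p hb
      _ = α * Δx ^ 2 := by ring
  have hRm2 : |Rm| ≤ α * Δx ^ 2 := by
    have e : Rm = (δm - a) + b := by rw [hRmdef]; ring
    rw [e]
    calc |(δm - a) + b| ≤ |δm - a| + |b| := abs_add_le _ _
      _ ≤ α * Δx ^ 2 / 2 + α * Δx ^ 2 / 2 := add_le_add hT1m hb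
      _ = α * Δx ^ 2 := by ring
  -- square and product bounds
  have ha2 : a ^ 2 ≤ α ^ 2 * Δx ^ 4 := by
    have h := pow_le_pow_left₀ (abs_nonneg a) ha 2
    rw [sq_abs] at h
    calc a ^ 2 ≤ (α * Δx ^ 2) ^ 2 := h
      _ = α ^ 2 * Δx ^ 4 := by ring
  have hb2 : b ^ 2 ≤ α ^ 2 * Δx ^ 4 / 4 := by
    have h := pow_le_pow_left₀ (abs_nonneg b) hb 2
    rw [sq_abs] at h
    calc b ^ 2 ≤ (α * Δx ^ 2 / 2) ^ 2 := h
      _ = α ^ 2 * Δx ^ 4 / 4 := by ring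
  have habp : |a + b| ≤ 3 / 2 * (α * Δx ^ 2) := (abs_add_le a b).trans (by linarith)
  have habm : |a - b| ≤ 3 / 2 * (α * Δx ^ 2) := (abs_sub a b).trans (by linarith)
  have p1 : (a + b) * Rp ≤ α * B * Δx ^ 5 / 4 := by
    calc (a + b) * Rp ≤ |(a + b) * Rp| := le_abs_self _
      _ = |a + b| * |Rp| := abs_mul _ _
      _ ≤ (3 / 2 * (α * Δx ^ 2)) * (B * Δx ^ 3 / 6) :=
          mul_le_mul habp hT2p (abs_nonneg _) (by positivity)
      _ = α * B * Δx ^ 5 / 4 := by ring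
  have p2 : (a - b) * Rm ≤ α * B * Δx ^ 5 / 4 := by
    calc (a - b) * Rm ≤ |(a - b) * Rm| := le_abs_self _
      _ = |a - b| * |Rm| := abs_mul _ _
      _ ≤ (3 / 2 * (α * Δx ^ 2)) * (B * Δx ^ 3 / 6) :=
          mul_le_mul habm hT2m (abs_nonneg _) (by positivity)
      _ = α * B * Δx ^ 5 / 4 := by ring
  have p3 : Rp ^ 2 ≤ α * B * Δx ^ 5 / 6 := by
    calc Rp ^ 2 = |Rp| * |Rp| := by rw [abs_mul_abs_self]; ring
      _ ≤ (α * Δx ^ 2) * (B * Δx ^ 3 / 6) :=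
          mul_le_mul hRp2 hT2p (abs_nonneg _) (by positivity)
      _ = α * B * Δx ^ 5 / 6 := by ring
  have p4 : Rm ^ 2 ≤ α * B * Δx ^ 5 / 6 := by
    calc Rm ^ 2 = |Rm| * |Rm| := by rw [abs_mul_abs_self]; ring
      _ ≤ (α * Δx ^ 2) * (B * Δx ^ 3 / 6) :=
          mul_le_mul hRm2 hT2m (abs_nonneg _) (by positivity)
      _ = α * B * Δx ^ 5 / 6 := by ring
  have expand : δp ^ 2 + δm ^ 2 = 2 * a ^ 2 + 2 * b ^ 2 + 2 * ((a + b) * Rp)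
      + 2 * ((a - b) * Rm) + Rp ^ 2 + Rm ^ 2 := by
    rw [hRpdef, hRmdef]; ring
  have hpos : 0 ≤ α * B * Δx ^ 5 := by positivity
  clear_value δp δm a b Rp Rm
  linarith [expand, ha2, hb2, p1, p2, p3, p4, hpos]
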